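/- Let ρ be a probabilistic choice function and, for each i, let s̄_i denote the maximum element of S_i. If ∑_{i=1}^n (1 − ρ_i(s̄_i)) ≤ 1 (equivalently, ρ admits a representation supported on near-optimal choice types), then ρ is identified by the Fréchet–Hoeffding lower bound: there exists a probability distribution π over choice types that represents ρ and satisfies π(⊴ s) = max(∑_{i=1}^n P_i(s_i) + 1 − n, 0) for every choice type s. -/
import Mathlib


open Finset

variable {n : ℕ} {S : Fin n → Type*} [∀ i, Fintype (S i)] [∀ i, LinearOrder (S i)]

/-- `ρ` is a probabilistic choice function: each `ρ i` is a probability distribution on `S i`. -/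
def IsPCF (ρ : ∀ i, S i → ℝ) : Prop :=
  (∀ i (x : S i), 0 ≤ ρ i x) ∧ ∀ i, ∑ x : S i, ρ i x = 1

/-- The cumulative choice function `P_i(x) = ∑_{y ≤ x} ρ_i(y)`. -/
noncomputable def cumul (ρ : ∀ i, S i → ℝ) (i : Fin n) (x : S i) : ℝ :=
  ∑ y ∈ Finset.univ.filter (fun y => y ≤ x), ρ i y

/-- `π` is a probability distribution over choice types. -/
def IsDist (π : (∀ i, S i) → ℝ) : Prop :=
  (∀ s, 0 ≤ π s) ∧ ∑ s : ∀ i, S i, π s = 1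

/-- `π` represents `ρ`: the marginals of `π` agree with `ρ`. -/
def Represents (π : (∀ i, S i) → ℝ) (ρ : ∀ i, S i → ℝ) : Prop :=
  ∀ i (x : S i), ∑ s ∈ Finset.univ.filter (fun s : ∀ i, S i => s i = x), π s = ρ i x

/-- `π(⊴ s)`: total mass on choice types componentwise below `s`. -/
noncomputable def cdfLe (π : (∀ i, S i) → ℝ) (s : ∀ i, S i) : ℝ :=
  ∑ t ∈ Finset.univ.filter (fun t : ∀ i, S i => ∀ i, t i ≤ s i), π t

/-- a pcf consistent with the 1-mistake model is identified by the
Fréchet–Hoeffding lower bound. -/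
theorem one_mistake_identified_by_FH_lower [∀ i, Nonempty (S i)]
    (ρ : ∀ i, S i → ℝ) (hρ : IsPCF ρ)
    (sbar : ∀ i, S i) (hsbar : ∀ i (x : S i), x ≤ sbar i)
    (hsum : ∑ i, (1 - ρ i (sbar i)) ≤ 1) :
    ∃ π : (∀ i, S i) → ℝ, IsDist π ∧ Represents π ρ ∧
      ∀ s : ∀ i, S i, cdfLe π s = max (∑ i, cumul ρ i (s i) + 1 - (n : ℝ)) 0 := by
  classical
  obtain ⟨hρ0, hρ1⟩ := hρ
  set c : ℝ := 1 - ∑ i, (1 - ρ i (sbar i)) with hc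
  have hc0 : 0 ≤ c := by simp only [hc]; linarith
  have hρtop : ∀ i, ρ i (sbar i) ≤ 1 := by
    intro i
    rw [← hρ1 i]
    exact Finset.single_le_sum (fun y _ => hρ0 i y) (Finset.mem_univ _)
  have hcumul_nonneg : ∀ i (x : S i), 0 ≤ cumul ρ i x := fun i x =>
    Finset.sum_nonneg fun y _ => hρ0 i y
  have hcumul_le_one : ∀ i (x : S i), cumul ρ i x ≤ 1 := by
    intro i x
    rw [← hρ1 i]
    exact Finset.sum_le_sum_of_subset_of_nonneg (Finset.filter_subset _ _)
      (fun y _ _ => hρ0 i y)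
  have hcumul_top : ∀ i, cumul ρ i (sbar i) = 1 := by
    intro i
    rw [show cumul ρ i (sbar i) =
      ∑ y ∈ Finset.univ.filter (fun y : S i => y ≤ sbar i), ρ i y from rfl]
    rw [show Finset.univ.filter (fun y : S i => y ≤ sbar i) = Finset.univ by
      ext y; simp [hsbar i y]]
    exact hρ1 i
  have hrest : ∀ i, ∑ x ∈ Finset.univ.filter (fun x : S i => x ≠ sbar i), ρ i x
      = 1 - ρ i (sbar i) := by
    intro i
    rw [Finset.filter_ne', Finset.sum_erase_eq_sub (Finset.mem_univ _), hρ1 i]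
  have hcumul_lt : ∀ i (x : S i), x ≠ sbar i → cumul ρ i x ≤ 1 - ρ i (sbar i) := by
    intro i x hx
    rw [← hrest i, Finset.filter_ne']
    refine Finset.sum_le_sum_of_subset_of_nonneg ?_ (fun y _ _ => hρ0 i y)
    intro y hy
    simp only [Finset.mem_filter, Finset.mem_univ, true_and] at hy
    refine Finset.mem_erase.2 ⟨?_, Finset.mem_univ _⟩
    intro h
    exact hx (le_antisymm (hsbar i x) (h ▸ hy))
  set π : (∀ i, S i) → ℝ := fun s =>
    (if s = sbar then c else 0) +
      ∑ i, if (s i ≠ sbar i ∧ ∀ j, j ≠ i → s j = sbar j) then ρ i (s i) else 0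
    with hπ
  have hπ0 : ∀ s, 0 ≤ π s := by
    intro s
    refine add_nonneg ?_ (Finset.sum_nonneg fun i _ => ?_)
    · split
      · exact hc0
      · exact le_rfl
    · split
      · exact hρ0 i (s i)
      · exact le_rfl
  -- the key summation lemma
  have key : ∀ A : Finset (∀ i, S i), ∑ s ∈ A, π s =
      (if sbar ∈ A then c else 0) +
      ∑ i, ∑ x ∈ Finset.univ.filter
          (fun x : S i => x ≠ sbar i ∧ Function.update sbar i x ∈ A), ρ i x := by
    intro A
    simp only [hπ]
    rw [Finset.sum_add_distrib]
    congr 1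
    · rw [Finset.sum_ite_eq' A sbar (fun _ => c)]
    · rw [Finset.sum_comm]
      refine Finset.sum_congr rfl fun i _ => ?_
      rw [← Finset.sum_filter]
      refine Finset.sum_nbij' (fun s => s i) (fun x => Function.update sbar i x)
        ?_ ?_ ?_ ?_ ?_
      · intro s hs
        simp only [Finset.mem_filter] at hs ⊢
        obtain ⟨hsA, hne, hall⟩ := hs
        have hupd : Function.update sbar i (s i) = s := by
          funext j
          by_cases hj : j = i
          · subst hj; simp
          · rw [Function.update_of_ne hj, hall j hj]
        exact ⟨Finset.mem_univ _, hne, by rwa [hupd]⟩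
      · intro x hx
        simp only [Finset.mem_filter, Finset.mem_univ, true_and] at hx ⊢
        refine ⟨hx.2, ?_, fun j hj => Function.update_of_ne hj _ _⟩
        simpa using hx.1
      · intro s hs
        simp only [Finset.mem_filter] at hs
        show Function.update sbar i (s i) = s
        funext j
        by_cases hj : j = i
        · subst hj; simp
        · rw [Function.update_of_ne hj, hs.2.2 j hj]
      · intro x _; simp
      · intro s _; rfl
  have htotal : ∑ s : ∀ i, S i, π s = 1 := by
    rw [key Finset.univ]
    simp only [Finset.mem_univ, if_true, and_true]
    rw [Finset.sum_congr rfl (fun i _ => hrest i)]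
    simp only [hc]; ring
  refine ⟨π, ⟨hπ0, htotal⟩, ?_, ?_⟩
  · -- Represents
    intro i x
    rw [key]
    by_cases hx : x = sbar i
    · subst hx
      rw [if_pos (by simp)]
      have hterm : ∀ j, (∑ y ∈ Finset.univ.filter
          (fun y : S j => y ≠ sbar j ∧ Function.update sbar j y ∈
            Finset.univ.filter (fun s : ∀ k, S k => s i = sbar i)), ρ j y) =
          if j = i then 0 else 1 - ρ j (sbar j) := by
        intro j
        by_cases hj : j = i
        · subst hj
          rw [if_pos rfl]
          convert Finset.sum_empty
          ext y
          simp only [Finset.mem_filter, Finset.mem_univ, true_and, Finset.notMem_empty,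
            iff_false, not_and]
          intro hy hmem
          simp only [Finset.mem_filter, Finset.mem_univ, true_and,
            Function.update_self] at hmem
          exact hy hmem
        · rw [if_neg hj, ← hrest j]
          refine Finset.sum_congr ?_ (fun _ _ => rfl)
          ext y
          simp only [Finset.mem_filter, Finset.mem_univ, true_and, and_iff_left_iff_imp]
          intro _
          rw [Function.update_of_ne (fun h : i = j => hj h.symm)]
      rw [Finset.sum_congr rfl fun j _ => hterm j]
      have h4 : ∑ j, (if j = i then (0:ℝ) else 1 - ρ j (sbar j)) =
          (∑ j, (1 - ρ j (sbar j))) - (1 - ρ i (sbar i)) := by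
        rw [← Finset.add_sum_erase _ (fun j => if j = i then (0:ℝ) else 1 - ρ j (sbar j))
            (Finset.mem_univ i),
          ← Finset.add_sum_erase _ (fun j => 1 - ρ j (sbar j)) (Finset.mem_univ i),
          if_pos rfl,
          Finset.sum_congr rfl (fun j hj => if_neg (Finset.mem_erase.1 hj).1)]
        ring
      rw [h4]
      simp only [hc]; ring
    · rw [if_neg (by
        simp only [Finset.mem_filter, Finset.mem_univ, true_and]
        exact fun h : sbar i = x => hx h.symm)]
      rw [Finset.sum_eq_single i ?_ (fun h => absurd (Finset.mem_univ i) h)]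
      · rw [show Finset.univ.filter
            (fun y : S i => y ≠ sbar i ∧ Function.update sbar i y ∈
              Finset.univ.filter (fun s : ∀ j, S j => s i = x)) = {x} from ?_]
        · simp
        · ext y
          simp only [Finset.mem_filter, Finset.mem_univ, true_and, Finset.mem_singleton,
            Function.update_self]
          constructor
          · rintro ⟨_, h⟩; exact h
          · rintro rfl; exact ⟨hx, rfl⟩
      · intro j _ hj
        convert Finset.sum_empty
        ext y
        simp only [Finset.mem_filter, Finset.mem_univ, true_and, Finset.notMem_empty,
          iff_false, not_and]
        intro _ hmem
        rw [Function.update_of_ne (fun h : i = j => hj h.symm)] at hmem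
        exact hx hmem.symm
  · -- cdf formula
    intro s
    rw [show cdfLe π s =
      ∑ t ∈ Finset.univ.filter (fun t : ∀ i, S i => ∀ i, t i ≤ s i), π t from rfl, key]
    by_cases hA : ∀ i, s i = sbar i
    -- Case A: s = sbar
    · have hs : s = sbar := funext hA
      rw [if_pos (by simp [hs, hsbar])]
      have hfil : ∀ i, Finset.univ.filter (fun x : S i => x ≠ sbar i ∧
          Function.update sbar i x ∈
            Finset.univ.filter fun t : ∀ j, S j => ∀ j, t j ≤ s j) =
          Finset.univ.filter (fun x : S i => x ≠ sbar i) := by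
        intro i
        ext y
        simp only [Finset.mem_filter, Finset.mem_univ, true_and, and_iff_left_iff_imp]
        intro _ j
        rw [hs]
        by_cases hj : j = i
        · subst hj; simpa using hsbar j y
        · simp [Function.update_of_ne hj]
      have e1 : ∑ i, ∑ x ∈ Finset.univ.filter (fun x : S i => x ≠ sbar i ∧
          Function.update sbar i x ∈
            Finset.univ.filter fun t : ∀ j, S j => ∀ j, t j ≤ s j), ρ i x =
          ∑ i, (1 - ρ i (sbar i)) :=
        Finset.sum_congr rfl fun i _ => by rw [hfil i, hrest i]
      have e2 : ∑ i, cumul ρ i (s i) = ∑ _i : Fin n, (1:ℝ) :=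
        Finset.sum_congr rfl fun i _ => by rw [hA i, hcumul_top i]
      rw [e1, e2]
      simp only [hc, Finset.sum_const, Finset.card_univ, Fintype.card_fin, nsmul_eq_mul,
        mul_one]
      rw [max_eq_left (by linarith)]
      ring
    · push_neg at hA
      obtain ⟨i, hi⟩ := hA
      have hsi : ¬ sbar i ≤ s i := fun h => hi (le_antisymm (hsbar i (s i)) h)
      rw [if_neg (by
        simp only [Finset.mem_filter, Finset.mem_univ, true_and]
        exact fun h => hsi (h i))]
      by_cases hB : ∀ j, j ≠ i → s j = sbar j
      -- Case B: exactly one mistake, at i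
      · have hterm : ∀ j, (∑ x ∈ Finset.univ.filter
            (fun x : S j => x ≠ sbar j ∧ Function.update sbar j x ∈
              Finset.univ.filter fun t : ∀ k, S k => ∀ k, t k ≤ s k), ρ j x) =
            if j = i then cumul ρ i (s i) else 0 := by
          intro j
          by_cases hj : j = i
          · subst hj
            rw [if_pos rfl]
            rw [show cumul ρ j (s j) =
              ∑ y ∈ Finset.univ.filter (fun y : S j => y ≤ s j), ρ j y from rfl]
            refine Finset.sum_congr ?_ (fun _ _ => rfl)
            ext y
            simp only [Finset.mem_filter, Finset.mem_univ, true_and]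
            constructor
            · rintro ⟨_, h⟩
              simpa using h j
            · intro hy
              refine ⟨fun h => hsi (h ▸ hy), fun k => ?_⟩
              by_cases hk : k = j
              · subst hk; simpa using hy
              · rw [Function.update_of_ne hk, hB k hk]
          · rw [if_neg hj]
            convert Finset.sum_empty
            ext y
            simp only [Finset.mem_filter, Finset.mem_univ, true_and, Finset.notMem_empty,
              iff_false, not_and]
            intro _ h
            have := h i
            rw [Function.update_of_ne (fun hh : i = j => hj hh.symm)] at this
            exact hsi this
        rw [Finset.sum_congr rfl fun j _ => hterm j,
          Finset.sum_ite_eq' Finset.univ i (fun _ => cumul ρ i (s i)),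
          if_pos (Finset.mem_univ i), zero_add]
        have hrhs : ∑ j, cumul ρ j (s j) = cumul ρ i (s i) + ((n : ℝ) - 1) := by
          rw [← Finset.add_sum_erase _ _ (Finset.mem_univ i)]
          congr 1
          have e3 : ∑ j ∈ Finset.univ.erase i, cumul ρ j (s j) =
              ∑ _j ∈ Finset.univ.erase i, (1:ℝ) :=
            Finset.sum_congr rfl (fun j hj => by
              rw [hB j (Finset.mem_erase.1 hj).1, hcumul_top j])
          rw [e3, Finset.sum_const, Finset.card_erase_of_mem (Finset.mem_univ i),
            Finset.card_univ, Fintype.card_fin, nsmul_eq_mul, mul_one]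
          have hn : 1 ≤ n := Nat.one_le_iff_ne_zero.2 (by
            rintro rfl; exact absurd i.2 (by simp))
          push_cast [Nat.cast_sub hn]
          ring
        rw [hrhs, max_eq_left (by linarith [hcumul_nonneg i (s i)])]
        ring
      -- Case C: at least two mistakes
      · push_neg at hB
        obtain ⟨i', hii', hi'⟩ := hB
        have hsi' : ¬ sbar i' ≤ s i' := fun h => hi' (le_antisymm (hsbar i' (s i')) h)
        have hzero : ∀ j, (∑ x ∈ Finset.univ.filter
            (fun x : S j => x ≠ sbar j ∧ Function.update sbar j x ∈
              Finset.univ.filter fun t : ∀ k, S k => ∀ k, t k ≤ s k), ρ j x) = 0 := by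
          intro j
          convert Finset.sum_empty
          ext y
          simp only [Finset.mem_filter, Finset.mem_univ, true_and, Finset.notMem_empty,
            iff_false, not_and]
          intro _ h
          by_cases hj : j = i
          · refine hsi' ?_
            have := h i'
            rwa [Function.update_of_ne (fun hh : i' = j => hii' (hj ▸ hh))] at this
          · refine hsi ?_
            have := h i
            rwa [Function.update_of_ne (fun hh : i = j => hj hh.symm)] at this
        rw [Finset.sum_congr rfl fun j _ => hzero j]
        simp only [Finset.sum_const_zero, zero_add, add_zero]
        have hii : i ≠ i' := fun h => hii' h.symm
        have h1 : (1 - ρ i (sbar i)) + (1 - ρ i' (sbar i')) ≤ 1 := by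
          calc (1 - ρ i (sbar i)) + (1 - ρ i' (sbar i'))
              = ∑ j ∈ ({i, i'} : Finset (Fin n)), (1 - ρ j (sbar j)) := by
                rw [Finset.sum_pair hii]
            _ ≤ ∑ j, (1 - ρ j (sbar j)) :=
                Finset.sum_le_sum_of_subset_of_nonneg (Finset.subset_univ _)
                  (fun j _ _ => by linarith [hρtop j])
            _ ≤ 1 := hsum
        have h2 : cumul ρ i (s i) + cumul ρ i' (s i') ≤ 1 := by
          have hl1 := hcumul_lt i (s i) hi
          have hl2 := hcumul_lt i' (s i') hi'
          linarith
        have hn2 : 2 ≤ n := by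
          have := Finset.card_le_card (Finset.subset_univ ({i, i'} : Finset (Fin n)))
          rwa [Finset.card_pair hii, Finset.card_univ, Fintype.card_fin] at this
        have h3 : ∑ j, cumul ρ j (s j) ≤
            cumul ρ i (s i) + cumul ρ i' (s i') + ((n : ℝ) - 2) := by
          have hsplit := Finset.sum_sdiff (f := fun j => cumul ρ j (s j))
            (Finset.subset_univ ({i, i'} : Finset (Fin n)))
          have hpair : ∑ j ∈ ({i, i'} : Finset (Fin n)), cumul ρ j (s j) =
              cumul ρ i (s i) + cumul ρ i' (s i') := Finset.sum_pair hii
          have hle : ∑ j ∈ Finset.univ \ ({i, i'} : Finset (Fin n)), cumul ρ j (s j) ≤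
              (n : ℝ) - 2 := by
            calc ∑ j ∈ Finset.univ \ ({i, i'} : Finset (Fin n)), cumul ρ j (s j)
                ≤ ∑ _j ∈ Finset.univ \ ({i, i'} : Finset (Fin n)), (1:ℝ) :=
                  Finset.sum_le_sum fun j _ => hcumul_le_one j (s j)
              _ = ((n - 2 : ℕ) : ℝ) := by
                  rw [Finset.sum_const, Finset.card_sdiff_of_subset (Finset.subset_univ _),
                    Finset.card_univ, Fintype.card_fin, Finset.card_pair hii,
                    nsmul_eq_mul, mul_one]
              _ = (n : ℝ) - 2 := by push_cast [Nat.cast_sub hn2]; ring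
          linarith [hsplit, hpair, hle]
        rw [max_eq_right (by linarith)]
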